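/- arXiv:2202.00079 — 2 statements merged into one kernel-verified Lean document; each statement's English description precedes it below -/
import Mathlib

section
/- Equality (Σ_a π(a)|π̃(a)/π(a) − 1|)² = 2 KL(π‖π̃) holds if and only if π̃(a) = π(a) for all a (both sides then being zero). -/
open scoped BigOperators

private lemma log_add_inv_pos {x : ℝ} (hx : 0 < x) (hx1 : x ≠ 1) :
    0 < Real.log x + 1 / x - 1 := by
  have hne : (1:ℝ) / x ≠ 1 := by
    intro h
    apply hx1
    field_simp at h
    linarith
  have h := Real.log_lt_sub_one_of_pos (x := 1 / x) (by positivity) hne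
  rw [Real.log_div one_ne_zero hx.ne', Real.log_one] at h
  linarith

private lemma xlog_nonneg {x : ℝ} (hx : 0 < x) : 0 ≤ x * Real.log x - x + 1 := by
  have h := Real.log_le_sub_one_of_pos (x := 1 / x) (by positivity)
  rw [Real.log_div one_ne_zero hx.ne', Real.log_one] at h
  have h2 := mul_le_mul_of_nonneg_left h hx.le
  have h4 : x * (1 / x - 1) = 1 - x := by field_simp
  rw [h4] at h2
  nlinarith [h2]

private noncomputable def gfun : ℝ → ℝ := fun x => (x + 1) * Real.log x - 2 * (x - 1)

private lemma gfun_hasDeriv {x : ℝ} (hx : 0 < x) :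
    HasDerivAt gfun (Real.log x + 1 / x - 1) x := by
  have h : HasDerivAt (fun x : ℝ => (x + 1) * Real.log x - 2 * (x - 1))
      (1 * Real.log x + (x + 1) * x⁻¹ - 2 * 1) x := by
    exact (((hasDerivAt_id x).add_const 1).mul (Real.hasDerivAt_log hx.ne')).sub
      (((hasDerivAt_id x).sub_const 1).const_mul 2)
  unfold gfun
  convert h using 1
  field_simp
  ring

private lemma gfun_contOn {s : Set ℝ} (hs : ∀ x ∈ s, (0:ℝ) < x) : ContinuousOn gfun s := by
  apply ContinuousOn.sub
  · exact (continuousOn_id.add continuousOn_const).mul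
      (Real.continuousOn_log.mono (fun x hx => (hs x hx).ne'))
  · fun_prop

private lemma gfun_pos {x : ℝ} (hx : 1 < x) : 0 < gfun x := by
  have hmono : StrictMonoOn gfun (Set.Ici 1) := by
    apply strictMonoOn_of_deriv_pos (convex_Ici 1) (gfun_contOn (fun y hy => by
      simp only [Set.mem_Ici] at hy; linarith))
    intro y hy
    rw [interior_Ici, Set.mem_Ioi] at hy
    rw [(gfun_hasDeriv (by linarith : (0:ℝ) < y)).deriv]
    exact log_add_inv_pos (by linarith) (by linarith)
  have := hmono (Set.self_mem_Ici) (Set.mem_Ici.mpr hx.le) hx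
  simpa [gfun] using this

private lemma gfun_neg {x : ℝ} (hx0 : 0 < x) (hx : x < 1) : gfun x < 0 := by
  have hmono : StrictMonoOn gfun (Set.Ioc 0 1) := by
    apply strictMonoOn_of_deriv_pos (convex_Ioc 0 1) (gfun_contOn (fun y hy => hy.1))
    intro y hy
    rw [interior_Ioc, Set.mem_Ioo] at hy
    rw [(gfun_hasDeriv hy.1).deriv]
    exact log_add_inv_pos hy.1 hy.2.ne
  have := hmono (Set.mem_Ioc.mpr ⟨hx0, hx.le⟩) (Set.mem_Ioc.mpr ⟨one_pos, le_refl 1⟩) hx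
  simpa [gfun] using this

private noncomputable def Gfun : ℝ → ℝ :=
  fun x => (2 * x + 4) * (x * Real.log x - x + 1) - 3 * (x - 1) ^ 2

private lemma Gfun_hasDeriv {x : ℝ} (hx : 0 < x) : HasDerivAt Gfun (4 * gfun x) x := by
  have h := ((((hasDerivAt_id x).const_mul 2).add_const 4).mul
      ((((hasDerivAt_id x).mul (Real.hasDerivAt_log hx.ne')).sub (hasDerivAt_id x)).add_const 1)).sub
      ((((hasDerivAt_id x).sub_const 1).pow 2).const_mul 3)
  simp only [id_eq] at h
  have hG : Gfun = fun x : ℝ => (2 * x + 4) * (x * Real.log x - x + 1) - 3 * (x - 1) ^ 2 := rfl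
  rw [hG]
  refine h.congr_deriv ?_
  have hxx : x * x⁻¹ = 1 := mul_inv_cancel₀ hx.ne'
  unfold gfun
  simp only [Pi.mul_apply, Pi.sub_apply, id_eq]
  rw [mul_comm x x⁻¹] at hxx
  field_simp
  ring

private lemma Gfun_contOn {s : Set ℝ} (hs : ∀ x ∈ s, (0:ℝ) < x) : ContinuousOn Gfun s := by
  have hlog : ContinuousOn Real.log s := Real.continuousOn_log.mono (fun x hx => (hs x hx).ne')
  apply ContinuousOn.sub
  · exact (ContinuousOn.add (continuousOn_const.mul continuousOn_id) continuousOn_const).mul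
      ((ContinuousOn.sub (continuousOn_id.mul hlog) continuousOn_id).add continuousOn_const)
  · fun_prop

private lemma Gfun_pos {x : ℝ} (hx0 : 0 < x) (hx1 : x ≠ 1) : 0 < Gfun x := by
  have hG1 : Gfun 1 = 0 := by simp [Gfun]
  rcases lt_or_gt_of_ne hx1 with h | h
  · have hanti : StrictAntiOn Gfun (Set.Ioc 0 1) := by
      apply strictAntiOn_of_deriv_neg (convex_Ioc 0 1) (Gfun_contOn (fun y hy => hy.1))
      intro y hy
      rw [interior_Ioc, Set.mem_Ioo] at hy
      rw [(Gfun_hasDeriv hy.1).deriv]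
      have := gfun_neg hy.1 hy.2
      linarith
    have := hanti (Set.mem_Ioc.mpr ⟨hx0, h.le⟩) (Set.mem_Ioc.mpr ⟨one_pos, le_refl 1⟩) h
    rw [hG1] at this; exact this
  · have hmono : StrictMonoOn Gfun (Set.Ici 1) := by
      apply strictMonoOn_of_deriv_pos (convex_Ici 1) (Gfun_contOn (fun y hy => by
        simp only [Set.mem_Ici] at hy; linarith))
      intro y hy
      rw [interior_Ici, Set.mem_Ioi] at hy
      rw [(Gfun_hasDeriv (by linarith : (0:ℝ) < y)).deriv]
      have := gfun_pos hy
      linarith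
    have := hmono Set.self_mem_Ici (Set.mem_Ici.mpr h.le) h
    rw [hG1] at this; exact this

/-- Pointwise strict Pinsker bound. -/
private lemma pointwise_lt {x : ℝ} (hx0 : 0 < x) (hx1 : x ≠ 1) :
    3 * (x - 1) ^ 2 < (2 * x + 4) * (x * Real.log x - x + 1) := by
  have := Gfun_pos hx0 hx1
  simp only [Gfun] at this
  linarith

private lemma pointwise_le {x : ℝ} (hx0 : 0 < x) :
    3 * (x - 1) ^ 2 ≤ (2 * x + 4) * (x * Real.log x - x + 1) := by
  rcases eq_or_ne x 1 with rfl | h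
  · norm_num
  · exact (pointwise_lt hx0 h).le

private lemma mul_abs_div_sub_one {u v : ℝ} (hu : 0 < u) : u * |v / u - 1| = |v - u| :=
  calc u * |v / u - 1| = |u| * |v / u - 1| := by rw [abs_of_pos hu]
    _ = |u * (v / u - 1)| := (abs_mul _ _).symm
    _ = |v - u| := by
        congr 1
        field_simp [hu.ne']

theorem sq_expected_ratio_deviation_eq_two_kl_iff {A : Type*} [Fintype A] (π πt : A → ℝ)
    (hπpos : ∀ a, 0 < π a) (hπtpos : ∀ a, 0 < πt a)
    (hπ1 : ∑ a, π a = 1) (hπt1 : ∑ a, πt a = 1) :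
    (∑ a, π a * |πt a / π a - 1|) ^ 2 = 2 * ∑ a, π a * Real.log (π a / πt a) ↔
      ∀ a, πt a = π a := by
  constructor
  · intro heq
    by_contra hne
    push_neg at hne
    obtain ⟨a₀, ha₀⟩ := hne
    set x : A → ℝ := fun a => π a / πt a with hx
    have hxpos : ∀ a, 0 < x a := fun a => div_pos (hπpos a) (hπtpos a)
    have hx₀ : x a₀ ≠ 1 := by
      show π a₀ / πt a₀ ≠ 1
      intro h
      exact ha₀ ((div_eq_one_iff_eq (hπtpos a₀).ne').mp h).symm
    -- rewrite LHS sum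
    have hLHS : ∀ a, π a * |πt a / π a - 1| = πt a * |x a - 1| := by
      intro a
      have e1 : π a * |πt a / π a - 1| = |πt a - π a| := mul_abs_div_sub_one (hπpos a)
      have e2 : πt a * |π a / πt a - 1| = |π a - πt a| := mul_abs_div_sub_one (hπtpos a)
      rw [e1, abs_sub_comm, ← e2]
    -- rewrite KL integrand
    have hKL : ∀ a, π a * Real.log (π a / πt a) = πt a * (x a * Real.log (x a)) := by
      intro a
      have : πt a * (π a / πt a) = π a := by
        rw [mul_comm, div_mul_cancel₀ _ (hπtpos a).ne']
      rw [show πt a * (π a / πt a * Real.log (π a / πt a))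
          = πt a * (π a / πt a) * Real.log (π a / πt a) from by ring, this]
    have hsumx : ∑ a, πt a * x a = 1 := by
      have h' : ∀ a, πt a * x a = π a := fun a => by
        show πt a * (π a / πt a) = π a
        rw [mul_comm, div_mul_cancel₀ _ (hπtpos a).ne']
      rw [Finset.sum_congr rfl (fun a _ => h' a), hπ1]
    set K : ℝ := ∑ a, π a * Real.log (π a / πt a) with hK
    have hKphi : ∑ a, πt a * (x a * Real.log (x a) - x a + 1) = K := by
      have h' : ∀ a, πt a * (x a * Real.log (x a) - x a + 1)
          = πt a * (x a * Real.log (x a)) - πt a * x a + πt a := fun a => by ring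
      rw [Finset.sum_congr rfl (fun a _ => h' a), Finset.sum_add_distrib,
        Finset.sum_sub_distrib, hsumx, hπt1, hK,
        Finset.sum_congr rfl (fun a _ => (hKL a).symm)]
      ring
    -- Cauchy-Schwarz setup
    set f : A → ℝ := fun a => Real.sqrt (πt a * ((2 * x a + 4) / 3)) with hf
    set g : A → ℝ := fun a => Real.sqrt (πt a * (x a * Real.log (x a) - x a + 1)) with hg
    have hphi_nn : ∀ a, 0 ≤ x a * Real.log (x a) - x a + 1 := fun a => xlog_nonneg (hxpos a)
    have hw_nn : ∀ a, (0:ℝ) ≤ (2 * x a + 4) / 3 :=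
      fun a => div_nonneg (by linarith [hxpos a]) (by norm_num)
    have hfg : ∀ a, f a * g a
        = πt a * Real.sqrt (((2 * x a + 4) / 3) * (x a * Real.log (x a) - x a + 1)) := by
      intro a
      rw [hf, hg, ← Real.sqrt_mul (mul_nonneg (hπtpos a).le (hw_nn a))]
      have h' : πt a * ((2 * x a + 4) / 3) * (πt a * (x a * Real.log (x a) - x a + 1))
          = πt a ^ 2 * (((2 * x a + 4) / 3) * (x a * Real.log (x a) - x a + 1)) := by ring
      rw [h', Real.sqrt_mul (sq_nonneg _), Real.sqrt_sq (hπtpos a).le]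
    set T : ℝ := ∑ a, f a * g a with hT
    have hCS : T ^ 2 ≤ 2 * K := by
      have h1 := Finset.sum_mul_sq_le_sq_mul_sq Finset.univ f g
      have hf2 : ∑ a, f a ^ 2 = 2 := by
        have h' : ∀ a, f a ^ 2 = (2 / 3) * (πt a * x a) + (4 / 3) * πt a := by
          intro a
          rw [hf, Real.sq_sqrt (mul_nonneg (hπtpos a).le (hw_nn a))]
          ring
        rw [Finset.sum_congr rfl fun a _ => h' a, Finset.sum_add_distrib,
          ← Finset.mul_sum, ← Finset.mul_sum, hsumx, hπt1]
        norm_num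
      have hg2 : ∑ a, g a ^ 2 = K := by
        rw [← hKphi]
        exact Finset.sum_congr rfl fun a _ => by
          rw [hg, Real.sq_sqrt (mul_nonneg (hπtpos a).le (hphi_nn a))]
      rw [hf2, hg2] at h1
      exact h1
    -- strict comparison of sums
    have hstrict : ∑ a, πt a * |x a - 1| < T := by
      refine Finset.sum_lt_sum (fun a _ => ?_) ⟨a₀, Finset.mem_univ a₀, ?_⟩
      · rw [hfg]
        apply mul_le_mul_of_nonneg_left _ (hπtpos a).le
        rw [← Real.sqrt_sq (abs_nonneg (x a - 1))]
        apply Real.sqrt_le_sqrt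
        rw [sq_abs]
        nlinarith [pointwise_le (hxpos a)]
      · rw [hfg]
        apply mul_lt_mul_of_pos_left _ (hπtpos a₀)
        rw [← Real.sqrt_sq (abs_nonneg (x a₀ - 1))]
        apply Real.sqrt_lt_sqrt (sq_nonneg _)
        rw [sq_abs]
        nlinarith [pointwise_lt (hxpos a₀) hx₀]
    have hS_nn : 0 ≤ ∑ a, πt a * |x a - 1| :=
      Finset.sum_nonneg fun a _ => mul_nonneg (hπtpos a).le (abs_nonneg _)
    have hlt : (∑ a, πt a * |x a - 1|) ^ 2 < 2 * K :=
      lt_of_lt_of_le (pow_lt_pow_left₀ hstrict hS_nn two_ne_zero) hCS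
    rw [Finset.sum_congr rfl (fun a _ => hLHS a)] at heq
    rw [heq] at hlt
    exact lt_irrefl _ hlt
  · intro h
    have h1 : ∀ a ∈ Finset.univ, π a * |πt a / π a - 1| = 0 := by
      intro a _
      rw [h a, div_self (hπpos a).ne']
      simp
    have h2 : ∀ a ∈ Finset.univ, π a * Real.log (π a / πt a) = 0 := by
      intro a _
      rw [h a, div_self (hπpos a).ne']
      simp
    rw [Finset.sum_congr rfl h1, Finset.sum_congr rfl h2]
    simp
end

section
/- Discounted state distribution difference bound: for policies π, π̃ on a finite MDP with discount γ ∈ [0,1), the discounted state distributions d_π = (1−γ)(I − γ P_πᵀ)⁻¹ p₀ and d_π̃ satisfy ‖d_π̃ − d_π‖₁ ≤ (γ/(1−γ)) · E_{s∼d_π, a∼π(·|s)} |π̃(a|s)/π(a|s) − 1|. -/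
open scoped BigOperators

/-- State transition matrix induced by policy `π`: `(Pmat P π) s s' = ∑ a, π s a * P s a s'`. -/
noncomputable def Pmat {S A : Type*} [Fintype A] (P : S → A → S → ℝ) (π : S → A → ℝ) :
    Matrix S S ℝ := fun s s' => ∑ a, π s a * P s a s'

/-- State distribution at time `t` when starting from `p0` and following `π`. -/
noncomputable def stateDist {S A : Type*} [Fintype S] [DecidableEq S] [Fintype A]
    (P : S → A → S → ℝ) (π : S → A → ℝ) (p0 : S → ℝ) (t : ℕ) : S → ℝ :=
  (((Pmat P π).transpose) ^ t).mulVec p0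

/-- Discounted state distribution `d_π(s) = (1-γ) ∑ γ^t Pr(s_t = s)`. -/
noncomputable def dDist {S A : Type*} [Fintype S] [DecidableEq S] [Fintype A]
    (P : S → A → S → ℝ) (π : S → A → ℝ) (p0 : S → ℝ) (γ : ℝ) (s : S) : ℝ :=
  (1 - γ) * ∑' t : ℕ, γ ^ t * stateDist P π p0 t s

/-- Expected discounted return `J(π)` with initial distribution `p0`. -/
noncomputable def Jret {S A : Type*} [Fintype S] [DecidableEq S] [Fintype A]
    (P : S → A → S → ℝ) (π : S → A → ℝ) (r : S → A → ℝ) (p0 : S → ℝ) (γ : ℝ) : ℝ :=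
  ∑' t : ℕ, γ ^ t * ∑ s, stateDist P π p0 t s * ∑ a, π s a * r s a

/-- Value function `V_π(s)`: return starting deterministically from `s`. -/
noncomputable def Vval {S A : Type*} [Fintype S] [Fintype A] [DecidableEq S]
    (P : S → A → S → ℝ) (π : S → A → ℝ) (r : S → A → ℝ) (γ : ℝ) (s : S) : ℝ :=
  Jret P π r (fun s' => if s' = s then 1 else 0) γ

/-- Action-value function `Q_π(s,a)`. -/
noncomputable def Qval {S A : Type*} [Fintype S] [Fintype A] [DecidableEq S]
    (P : S → A → S → ℝ) (π : S → A → ℝ) (r : S → A → ℝ) (γ : ℝ) (s : S) (a : A) : ℝ :=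
  r s a + γ * ∑ s', P s a s' * Vval P π r γ s'

/-- Advantage function `A_π(s,a) = Q_π(s,a) - V_π(s)`. -/
noncomputable def Adv {S A : Type*} [Fintype S] [Fintype A] [DecidableEq S]
    (P : S → A → S → ℝ) (π : S → A → ℝ) (r : S → A → ℝ) (γ : ℝ) (s : S) (a : A) : ℝ :=
  Qval P π r γ s a - Vval P π r γ s

section aux
variable {S A : Type*} [Fintype S] [DecidableEq S] [Fintype A]
variable (P : S → A → S → ℝ) (π : S → A → ℝ) (p0 : S → ℝ) (γ : ℝ)

lemma stateDist_zero : stateDist P π p0 0 = p0 := by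
  funext s; simp [stateDist]

lemma stateDist_succ (t : ℕ) (s : S) :
    stateDist P π p0 (t + 1) s = ∑ s', Pmat P π s' s * stateDist P π p0 t s' := by
  simp only [stateDist, pow_succ', ← Matrix.mulVec_mulVec]
  simp [Matrix.mulVec, dotProduct, Matrix.transpose_apply]

lemma Pmat_nonneg (hP0 : ∀ s a s', 0 ≤ P s a s') (hπ0 : ∀ s a, 0 ≤ π s a) (s s' : S) :
    0 ≤ Pmat P π s s' :=
  Finset.sum_nonneg fun a _ => mul_nonneg (hπ0 s a) (hP0 s a s')

lemma Pmat_sum (hP1 : ∀ s a, ∑ s', P s a s' = 1) (hπ1 : ∀ s, ∑ a, π s a = 1) (s : S) :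
    ∑ s', Pmat P π s s' = 1 := by
  unfold Pmat
  rw [Finset.sum_comm]
  simp_rw [← Finset.mul_sum, hP1, mul_one]
  exact hπ1 s

lemma stateDist_nonneg (hP0 : ∀ s a s', 0 ≤ P s a s') (hπ0 : ∀ s a, 0 ≤ π s a)
    (hp00 : ∀ s, 0 ≤ p0 s) (t : ℕ) (s : S) : 0 ≤ stateDist P π p0 t s := by
  induction t generalizing s with
  | zero => rw [stateDist_zero]; exact hp00 s
  | succ t ih =>
    rw [stateDist_succ]
    exact Finset.sum_nonneg fun s' _ => mul_nonneg (Pmat_nonneg P π hP0 hπ0 s' s) (ih s')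

lemma stateDist_sum (hP1 : ∀ s a, ∑ s', P s a s' = 1) (hπ1 : ∀ s, ∑ a, π s a = 1)
    (hp01 : ∑ s, p0 s = 1) (t : ℕ) : ∑ s, stateDist P π p0 t s = 1 := by
  induction t with
  | zero => simpa [stateDist_zero] using hp01
  | succ t ih =>
    simp_rw [stateDist_succ]
    rw [Finset.sum_comm]
    simp_rw [← Finset.sum_mul, Pmat_sum P π hP1 hπ1]
    simpa using ih

lemma stateDist_le_one (hP0 : ∀ s a s', 0 ≤ P s a s') (hP1 : ∀ s a, ∑ s', P s a s' = 1)
    (hπ0 : ∀ s a, 0 ≤ π s a) (hπ1 : ∀ s, ∑ a, π s a = 1)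
    (hp00 : ∀ s, 0 ≤ p0 s) (hp01 : ∑ s, p0 s = 1) (t : ℕ) (s : S) :
    stateDist P π p0 t s ≤ 1 := by
  calc stateDist P π p0 t s ≤ ∑ s', stateDist P π p0 t s' :=
        Finset.single_le_sum (fun s' _ => stateDist_nonneg P π p0 hP0 hπ0 hp00 t s')
          (Finset.mem_univ s)
    _ = 1 := stateDist_sum P π p0 hP1 hπ1 hp01 t

lemma summable_aux (hγ0 : 0 ≤ γ) (hγ1 : γ < 1)
    (hP0 : ∀ s a s', 0 ≤ P s a s') (hP1 : ∀ s a, ∑ s', P s a s' = 1)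
    (hπ0 : ∀ s a, 0 ≤ π s a) (hπ1 : ∀ s, ∑ a, π s a = 1)
    (hp00 : ∀ s, 0 ≤ p0 s) (hp01 : ∑ s, p0 s = 1) (s : S) :
    Summable (fun t : ℕ => γ ^ t * stateDist P π p0 t s) := by
  apply Summable.of_nonneg_of_le
    (fun t => mul_nonneg (pow_nonneg hγ0 t) (stateDist_nonneg P π p0 hP0 hπ0 hp00 t s))
    (fun t => ?_) (summable_geometric_of_lt_one hγ0 hγ1)
  calc γ ^ t * stateDist P π p0 t s ≤ γ ^ t * 1 :=
        mul_le_mul_of_nonneg_left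
          (stateDist_le_one P π p0 hP0 hP1 hπ0 hπ1 hp00 hp01 t s) (pow_nonneg hγ0 t)
    _ = γ ^ t := mul_one _

lemma dDist_nonneg (hγ1 : γ < 1) (hγ0 : 0 ≤ γ)
    (hP0 : ∀ s a s', 0 ≤ P s a s') (hπ0 : ∀ s a, 0 ≤ π s a)
    (hp00 : ∀ s, 0 ≤ p0 s) (s : S) : 0 ≤ dDist P π p0 γ s := by
  apply mul_nonneg (by linarith)
  exact tsum_nonneg fun t => mul_nonneg (pow_nonneg hγ0 t) (stateDist_nonneg P π p0 hP0 hπ0 hp00 t s)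

lemma dDist_fixed (hγ0 : 0 ≤ γ) (hγ1 : γ < 1)
    (hP0 : ∀ s a s', 0 ≤ P s a s') (hP1 : ∀ s a, ∑ s', P s a s' = 1)
    (hπ0 : ∀ s a, 0 ≤ π s a) (hπ1 : ∀ s, ∑ a, π s a = 1)
    (hp00 : ∀ s, 0 ≤ p0 s) (hp01 : ∑ s, p0 s = 1) (s : S) :
    dDist P π p0 γ s = (1 - γ) * p0 s + γ * ∑ s', Pmat P π s' s * dDist P π p0 γ s' := by
  have hsum : ∀ s', Summable (fun t : ℕ => γ ^ t * stateDist P π p0 t s') :=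
    summable_aux P π p0 γ hγ0 hγ1 hP0 hP1 hπ0 hπ1 hp00 hp01
  have h1 : ∀ t : ℕ, γ ^ (t+1) * stateDist P π p0 (t+1) s
      = γ * ∑ s', Pmat P π s' s * (γ ^ t * stateDist P π p0 t s') := by
    intro t
    rw [stateDist_succ, Finset.mul_sum, Finset.mul_sum]
    exact Finset.sum_congr rfl fun s' _ => by ring
  calc dDist P π p0 γ s
      = (1 - γ) * (p0 s + ∑' t : ℕ, γ ^ (t+1) * stateDist P π p0 (t+1) s) := by
        unfold dDist
        rw [Summable.tsum_eq_zero_add (hsum s)]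
        simp [stateDist_zero]
    _ = (1 - γ) * (p0 s + γ * ∑ s', Pmat P π s' s * ∑' t : ℕ, γ ^ t * stateDist P π p0 t s') := by
        congr 2
        rw [tsum_congr h1, tsum_mul_left,
          Summable.tsum_finsetSum (fun s' _ => ((hsum s').mul_left (Pmat P π s' s)))]
        congr 1
        exact Finset.sum_congr rfl fun s' _ => (tsum_mul_left)
    _ = (1 - γ) * p0 s + γ * ∑ s', Pmat P π s' s * dDist P π p0 γ s' := by
        have key : ∑ s', Pmat P π s' s * dDist P π p0 γ s'
            = (1 - γ) * ∑ s', Pmat P π s' s * ∑' t : ℕ, γ ^ t * stateDist P π p0 t s' := by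
          rw [Finset.mul_sum]
          exact Finset.sum_congr rfl fun s' _ => by unfold dDist; ring
        rw [key]; ring

end aux

theorem discounted_state_distribution_difference_bound {S A : Type*}
    [Fintype S] [DecidableEq S] [Fintype A] (P : S → A → S → ℝ) (π πt : S → A → ℝ) (p0 : S → ℝ) (γ : ℝ)
    (hγ0 : 0 ≤ γ) (hγ1 : γ < 1)
    (hP0 : ∀ s a s', 0 ≤ P s a s') (hP1 : ∀ s a, ∑ s', P s a s' = 1)
    (hπpos : ∀ s a, 0 < π s a) (hπ1 : ∀ s, ∑ a, π s a = 1)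
    (hπt0 : ∀ s a, 0 ≤ πt s a) (hπt1 : ∀ s, ∑ a, πt s a = 1)
    (hp00 : ∀ s, 0 ≤ p0 s) (hp01 : ∑ s, p0 s = 1) :
    ∑ s, |dDist P πt p0 γ s - dDist P π p0 γ s| ≤
      (γ / (1 - γ)) * ∑ s, ∑ a, dDist P π p0 γ s * π s a * |πt s a / π s a - 1| := by
  have hπ0 : ∀ s a, 0 ≤ π s a := fun s a => (hπpos s a).le
  set d := dDist P π p0 γ with hd
  set dt := dDist P πt p0 γ with hdt
  have hdnn : ∀ s, 0 ≤ d s := dDist_nonneg P π p0 γ hγ1 hγ0 hP0 hπ0 hp00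
  have hdtd : ∀ s, dt s - d s
      = γ * (∑ s', Pmat P πt s' s * (dt s' - d s'))
        + γ * ∑ s', (Pmat P πt s' s - Pmat P π s' s) * d s' := by
    intro s
    have e1 := dDist_fixed P π p0 γ hγ0 hγ1 hP0 hP1 hπ0 hπ1 hp00 hp01 s
    have e2 := dDist_fixed P πt p0 γ hγ0 hγ1 hP0 hP1 hπt0 hπt1 hp00 hp01 s
    rw [← hd] at e1; rw [← hdt] at e2
    have e3 : ∑ s', (Pmat P πt s' s * (dt s' - d s') + (Pmat P πt s' s - Pmat P π s' s) * d s')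
        = ∑ s', Pmat P πt s' s * dt s' - ∑ s', Pmat P π s' s * d s' := by
      rw [← Finset.sum_sub_distrib]
      exact Finset.sum_congr rfl fun s' _ => by ring
    rw [Finset.sum_add_distrib] at e3
    linear_combination e2 - e1 - γ * e3
  set L := ∑ s, |dt s - d s| with hL
  set T := ∑ s', d s' * ∑ a, |πt s' a - π s' a| with hT
  -- bound A
  have hA : ∑ s, |∑ s', Pmat P πt s' s * (dt s' - d s')| ≤ L := by
    calc ∑ s, |∑ s', Pmat P πt s' s * (dt s' - d s')|
        ≤ ∑ s, ∑ s', Pmat P πt s' s * |dt s' - d s'| := by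
          refine Finset.sum_le_sum fun s _ => ?_
          refine (Finset.abs_sum_le_sum_abs _ _).trans (le_of_eq ?_)
          exact Finset.sum_congr rfl fun s' _ => by
            rw [abs_mul, abs_of_nonneg (Pmat_nonneg P πt hP0 hπt0 s' s)]
      _ = ∑ s', |dt s' - d s'| * ∑ s, Pmat P πt s' s := by
          rw [Finset.sum_comm]
          refine Finset.sum_congr rfl fun s' _ => ?_
          rw [Finset.mul_sum]
          exact Finset.sum_congr rfl fun s _ => mul_comm _ _
      _ = L := by
          simp_rw [Pmat_sum P πt hP1 hπt1, mul_one]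
          exact hL.symm
  -- bound B
  have hB : ∑ s, |∑ s', (Pmat P πt s' s - Pmat P π s' s) * d s'| ≤ T := by
    calc ∑ s, |∑ s', (Pmat P πt s' s - Pmat P π s' s) * d s'|
        ≤ ∑ s, ∑ s', |Pmat P πt s' s - Pmat P π s' s| * d s' := by
          refine Finset.sum_le_sum fun s _ => ?_
          refine (Finset.abs_sum_le_sum_abs _ _).trans (le_of_eq ?_)
          exact Finset.sum_congr rfl fun s' _ => by
            rw [abs_mul, abs_of_nonneg (hdnn s')]
      _ = ∑ s', d s' * ∑ s, |Pmat P πt s' s - Pmat P π s' s| := by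
          rw [Finset.sum_comm]
          refine Finset.sum_congr rfl fun s' _ => ?_
          rw [Finset.mul_sum]
          exact Finset.sum_congr rfl fun s _ => mul_comm _ _
      _ ≤ T := by
          refine Finset.sum_le_sum fun s' _ => ?_
          refine mul_le_mul_of_nonneg_left ?_ (hdnn s')
          calc ∑ s, |Pmat P πt s' s - Pmat P π s' s|
              ≤ ∑ s, ∑ a, |πt s' a - π s' a| * P s' a s := by
                refine Finset.sum_le_sum fun s _ => ?_
                have : Pmat P πt s' s - Pmat P π s' s
                    = ∑ a, (πt s' a - π s' a) * P s' a s := by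
                  unfold Pmat
                  rw [← Finset.sum_sub_distrib]
                  exact Finset.sum_congr rfl fun a _ => by ring
                rw [this]
                refine (Finset.abs_sum_le_sum_abs _ _).trans (le_of_eq ?_)
                exact Finset.sum_congr rfl fun a _ => by
                  rw [abs_mul, abs_of_nonneg (hP0 s' a s)]
            _ = ∑ a, |πt s' a - π s' a| := by
                rw [Finset.sum_comm]
                exact Finset.sum_congr rfl fun a _ => by
                  rw [← Finset.mul_sum, hP1, mul_one]
  -- main inequality
  have hmain : L ≤ γ * L + γ * T := by
    calc L = ∑ s, |dt s - d s| := hL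
      _ ≤ ∑ s, (γ * |∑ s', Pmat P πt s' s * (dt s' - d s')|
            + γ * |∑ s', (Pmat P πt s' s - Pmat P π s' s) * d s'|) := by
          refine Finset.sum_le_sum fun s _ => ?_
          rw [hdtd s]
          refine (abs_add_le _ _).trans (le_of_eq ?_)
          rw [abs_mul, abs_mul, abs_of_nonneg hγ0]
      _ = γ * ∑ s, |∑ s', Pmat P πt s' s * (dt s' - d s')|
            + γ * ∑ s, |∑ s', (Pmat P πt s' s - Pmat P π s' s) * d s'| := by
          rw [Finset.sum_add_distrib, Finset.mul_sum, Finset.mul_sum]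
      _ ≤ γ * L + γ * T := by
          have := mul_le_mul_of_nonneg_left hA hγ0
          have := mul_le_mul_of_nonneg_left hB hγ0
          linarith
  -- rewrite RHS as T
  have hRHS : ∑ s, ∑ a, d s * π s a * |πt s a / π s a - 1| = T := by
    refine Finset.sum_congr rfl fun s _ => ?_
    rw [Finset.mul_sum]
    refine Finset.sum_congr rfl fun a _ => ?_
    rw [mul_assoc]
    congr 1
    calc π s a * |πt s a / π s a - 1| = |π s a * (πt s a / π s a - 1)| := by
          rw [abs_mul, abs_of_pos (hπpos s a)]
      _ = |πt s a - π s a| := by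
          congr 1
          rw [mul_sub, mul_one, mul_div_cancel₀ _ (hπpos s a).ne']
  rw [hRHS, div_mul_eq_mul_div, le_div_iff₀ (by linarith : (0:ℝ) < 1 - γ)]
  nlinarith [hmain]
end
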